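/- Let χ : ℝ → ℝ be continuous, bounded on a neighborhood of the origin, and satisfy M_α(χ) < ∞ for some α > 0. Then for every γ > 0, the tail sums ∑_{k ∈ ℤ, |wx−k| > γw} |χ(wx−k)| converge to 0 as w → +∞, uniformly with respect to x ∈ ℝ. -/
import Mathlib


open Real Filter

/-- The discrete absolute moment of order `α` of `χ` (valued in `ℝ≥0∞`). -/
noncomputable def Dmom (χ : ℝ → ℝ) (α : ℝ) : ENNReal :=
  ⨆ u : ℝ, ∑' k : ℤ, ENNReal.ofReal (|u - (k : ℝ)| ^ α * |χ (u - (k : ℝ))|)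

theorem tail_sums_tendsto_zero_uniformly (χ : ℝ → ℝ) (hχ : Continuous χ)
    (hbdd : ∃ C δ : ℝ, 0 < δ ∧ ∀ x : ℝ, |x| ≤ δ → |χ x| ≤ C)
    (α : ℝ) (hα : 0 < α) (hM : Dmom χ α < ⊤) (γ : ℝ) (hγ : 0 < γ) :
    ∀ ε : ℝ, 0 < ε → ∃ W : ℝ, ∀ w : ℝ, W ≤ w → ∀ x : ℝ,
      (∑' k : ℤ, ENNReal.ofReal
          (if γ * w < |w * x - (k : ℝ)| then |χ (w * x - (k : ℝ))| else 0))
        < ENNReal.ofReal ε := by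
  intro ε hε
  have hD : Dmom χ α ≠ ⊤ := hM.ne
  have h1 : Tendsto (fun w : ℝ => γ * w) atTop atTop :=
    Tendsto.const_mul_atTop hγ tendsto_id
  have h2 : Tendsto (fun w : ℝ => (γ * w) ^ α) atTop atTop :=
    (tendsto_rpow_atTop hα).comp h1
  have h3 : Tendsto (fun w : ℝ => ((γ * w) ^ α)⁻¹) atTop (nhds 0) :=
    tendsto_inv_atTop_zero.comp h2
  have h4 : Tendsto (fun w : ℝ => ENNReal.ofReal (((γ * w) ^ α)⁻¹) * Dmom χ α)
      atTop (nhds 0) := by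
    have := ENNReal.Tendsto.mul_const (ENNReal.tendsto_ofReal h3) (Or.inr hD)
    simpa using this
  have h5 : ∀ᶠ w : ℝ in atTop,
      ENNReal.ofReal (((γ * w) ^ α)⁻¹) * Dmom χ α < ENNReal.ofReal ε :=
    h4.eventually (gt_mem_nhds (ENNReal.ofReal_pos.2 hε))
  obtain ⟨W, hW⟩ := (h5.and (eventually_ge_atTop (1 : ℝ))).exists_forall_of_atTop
  refine ⟨W, fun w hw x => ?_⟩
  obtain ⟨hWlt, hw1⟩ := hW w hw
  have hw0 : 0 < γ * w := mul_pos hγ (lt_of_lt_of_le one_pos hw1)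
  have hp0 : 0 < (γ * w) ^ α := Real.rpow_pos_of_pos hw0 α
  calc (∑' k : ℤ, ENNReal.ofReal
          (if γ * w < |w * x - (k : ℝ)| then |χ (w * x - (k : ℝ))| else 0))
      ≤ ∑' k : ℤ, ENNReal.ofReal (((γ * w) ^ α)⁻¹) *
          ENNReal.ofReal (|w * x - (k : ℝ)| ^ α * |χ (w * x - (k : ℝ))|) := by
        apply ENNReal.tsum_le_tsum
        intro k
        split_ifs with h
        · rw [← ENNReal.ofReal_mul (by positivity)]
          apply ENNReal.ofReal_le_ofReal
          have hle : (γ * w) ^ α ≤ |w * x - (k : ℝ)| ^ α :=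
            Real.rpow_le_rpow hw0.le h.le hα.le
          calc |χ (w * x - (k : ℝ))|
              = ((γ * w) ^ α)⁻¹ * ((γ * w) ^ α * |χ (w * x - (k : ℝ))|) := by
                field_simp
            _ ≤ ((γ * w) ^ α)⁻¹ * (|w * x - (k : ℝ)| ^ α * |χ (w * x - (k : ℝ))|) := by
                gcongr
        · simp
    _ = ENNReal.ofReal (((γ * w) ^ α)⁻¹) *
          ∑' k : ℤ, ENNReal.ofReal (|w * x - (k : ℝ)| ^ α * |χ (w * x - (k : ℝ))|) :=
        ENNReal.tsum_mul_left
    _ ≤ ENNReal.ofReal (((γ * w) ^ α)⁻¹) * Dmom χ α := by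
        gcongr
        exact le_iSup (fun u : ℝ => ∑' k : ℤ,
          ENNReal.ofReal (|u - (k : ℝ)| ^ α * |χ (u - (k : ℝ))|)) (w * x)
    _ < ENNReal.ofReal ε := hWlt
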